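/- Let G' be a graph with at least one vertex and r ≥ 2 an integer. Then γ_oidR(G' ⊙ \overline{K_r}) = 3·|V(G')| = 3·β(G' ⊙ \overline{K_r}), where G' ⊙ \overline{K_r} is the corona of G' with the empty graph on r vertices. -/

import Mathlib

open SimpleGraph Finset

/-- Outer independent double Roman dominating function. -/
def IsOIDRDF {V : Type*} (G : SimpleGraph V) (f : V → ℕ) : Prop :=
  (∀ v, f v ≤ 3) ∧
  (∀ v, f v = 0 → (∃ u, G.Adj v u ∧ f u = 3) ∨
    (∃ u w, u ≠ w ∧ G.Adj v u ∧ G.Adj v w ∧ f u = 2 ∧ f w = 2)) ∧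
  (∀ v, f v = 1 → ∃ u, G.Adj v u ∧ 2 ≤ f u) ∧
  (∀ u v, G.Adj u v → f u = 0 → f v ≠ 0)

/-- Outer independent double Roman domination number. -/
noncomputable def oidRNum {V : Type*} (G : SimpleGraph V) [Fintype V] : ℕ :=
  sInf {w | ∃ f : V → ℕ, IsOIDRDF G f ∧ w = ∑ v, f v}

/-- Outer independent Roman dominating function. -/
def IsOIRDF {V : Type*} (G : SimpleGraph V) (f : V → ℕ) : Prop :=
  (∀ v, f v ≤ 2) ∧
  (∀ v, f v = 0 → ∃ u, G.Adj v u ∧ f u = 2) ∧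
  (∀ u v, G.Adj u v → f u = 0 → f v ≠ 0)

/-- Outer independent Roman domination number. -/
noncomputable def oiRNum {V : Type*} (G : SimpleGraph V) [Fintype V] : ℕ :=
  sInf {w | ∃ f : V → ℕ, IsOIRDF G f ∧ w = ∑ v, f v}

/-- Vertex cover number. -/
noncomputable def coverNum {V : Type*} (G : SimpleGraph V) [Fintype V] : ℕ :=
  sInf {k | ∃ S : Finset V, S.card = k ∧ ∀ u v, G.Adj u v → u ∈ S ∨ v ∈ S}

/-- Domination number. -/
noncomputable def domNum {V : Type*} (G : SimpleGraph V) [Fintype V] : ℕ :=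
  sInf {k | ∃ S : Finset V, S.card = k ∧ ∀ v, v ∉ S → ∃ u ∈ S, G.Adj v u}

/-- Independence number. -/
noncomputable def indNum {V : Type*} (G : SimpleGraph V) [Fintype V] : ℕ :=
  sSup {k | ∃ S : Finset V, S.card = k ∧ ∀ u ∈ S, ∀ v ∈ S, ¬ G.Adj u v}

/-- Maximum degree. -/
noncomputable def maxDeg {V : Type*} (G : SimpleGraph V) [Fintype V] : ℕ :=
  sSup (Set.range fun v => Nat.card {u | G.Adj v u})

/-- Underlying relation for the corona product. -/
def coronaRel {V W : Type*} (G : SimpleGraph V) (H : SimpleGraph W) :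
    (V ⊕ V × W) → (V ⊕ V × W) → Prop
  | Sum.inl u, Sum.inl v => G.Adj u v
  | Sum.inl u, Sum.inr p => u = p.1
  | Sum.inr p, Sum.inl u => u = p.1
  | Sum.inr p, Sum.inr q => p.1 = q.1 ∧ H.Adj p.2 q.2

/-- The corona product `G ⊙ H`. -/
def corona {V W : Type*} (G : SimpleGraph V) (H : SimpleGraph W) :
    SimpleGraph (V ⊕ V × W) :=
  SimpleGraph.fromRel (coronaRel G H)


section Aux

variable {V : Type*} [Fintype V] [Nonempty V] (G : SimpleGraph V) (r : ℕ)

lemma corona_adj_inl_inr (v : V) (p : V × Fin r) :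
    (corona G (⊥ : SimpleGraph (Fin r))).Adj (Sum.inl v) (Sum.inr p) ↔ v = p.1 := by
  simp only [corona, SimpleGraph.fromRel_adj, coronaRel]
  constructor
  · rintro ⟨-, h | h⟩ <;> exact h
  · intro h; exact ⟨by simp, Or.inl h⟩

lemma corona_nbr_of_inr (v : V) (j : Fin r) (u : V ⊕ V × Fin r)
    (h : (corona G (⊥ : SimpleGraph (Fin r))).Adj (Sum.inr (v, j)) u) :
    u = Sum.inl v := by
  cases u with
  | inl w =>
    have := ((corona G (⊥ : SimpleGraph (Fin r))).adj_symm h)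
    rw [corona_adj_inl_inr] at this
    rw [this]
  | inr q =>
    exfalso
    simp only [corona, SimpleGraph.fromRel_adj, coronaRel] at h
    rcases h with ⟨-, ⟨-, h⟩ | ⟨-, h⟩⟩ <;> exact h.elim

lemma corona_block_sum (hr : 2 ≤ r) (f : V ⊕ V × Fin r → ℕ)
    (hf : IsOIDRDF (corona G (⊥ : SimpleGraph (Fin r))) f) (v : V) :
    3 ≤ f (Sum.inl v) + ∑ j : Fin r, f (Sum.inr (v, j)) := by
  obtain ⟨hle, h0, h1, hind⟩ := hf
  by_cases h3 : f (Sum.inl v) = 3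
  · omega
  have key : ∀ j : Fin r, 1 ≤ f (Sum.inr (v, j)) := by
    intro j
    by_contra h
    push_neg at h
    interval_cases hz : f (Sum.inr (v, j))
    rcases h0 _ hz with ⟨u, hu, hu3⟩ | ⟨u, w, huw, hu, hw, -, -⟩
    · rw [corona_nbr_of_inr G r v j u hu] at hu3; exact h3 hu3
    · rw [corona_nbr_of_inr G r v j u hu, corona_nbr_of_inr G r v j w hw] at huw
      exact huw rfl
  by_cases h2 : 2 ≤ f (Sum.inl v)
  · have : r ≤ ∑ j : Fin r, f (Sum.inr (v, j)) := by
      calc r = ∑ _j : Fin r, 1 := by simp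
      _ ≤ _ := Finset.sum_le_sum fun j _ => key j
    omega
  · have key2 : ∀ j : Fin r, 2 ≤ f (Sum.inr (v, j)) := by
      intro j
      by_contra h
      push_neg at h
      have h1' : f (Sum.inr (v, j)) = 1 := by have := key j; omega
      obtain ⟨u, hu, hu2⟩ := h1 _ h1'
      rw [corona_nbr_of_inr G r v j u hu] at hu2
      omega
    have : 2 * r ≤ ∑ j : Fin r, f (Sum.inr (v, j)) := by
      calc 2 * r = ∑ _j : Fin r, 2 := by simp [mul_comm]
      _ ≤ _ := Finset.sum_le_sum fun j _ => key2 j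
    omega

lemma corona_cover_num (hr : 2 ≤ r) :
    coverNum (corona G (⊥ : SimpleGraph (Fin r))) = Fintype.card V := by
  classical
  have hmem : Fintype.card V ∈
      {k | ∃ S : Finset (V ⊕ V × Fin r), S.card = k ∧
        ∀ u v, (corona G (⊥ : SimpleGraph (Fin r))).Adj u v → u ∈ S ∨ v ∈ S} := by
    refine ⟨Finset.univ.image Sum.inl, ?_, ?_⟩
    · rw [Finset.card_image_of_injective _ Sum.inl_injective, Finset.card_univ]
    · intro u w h
      cases u with
      | inl a => left; simp
      | inr p =>
        right
        rw [corona_nbr_of_inr G r p.1 p.2 w (by simpa using h)]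
        simp
  apply le_antisymm
  · exact Nat.sInf_le hmem
  · refine le_csInf ⟨_, hmem⟩ ?_
    rintro k ⟨S, hSc, hS⟩
    subst hSc
    have hpos : (0 : ℕ) < r := by omega
    set g : V → V ⊕ V × Fin r := fun v =>
      if Sum.inl v ∈ S then Sum.inl v else Sum.inr (v, ⟨0, hpos⟩) with hg
    have hmaps : ∀ v, g v ∈ S := by
      intro v
      by_cases h : Sum.inl v ∈ S
      · simpa [hg, h]
      · have hadj : (corona G (⊥ : SimpleGraph (Fin r))).Adj (Sum.inl v)
            (Sum.inr (v, ⟨0, hpos⟩)) := by rw [corona_adj_inl_inr]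
        rcases hS _ _ hadj with h' | h'
        · exact absurd h' h
        · simpa [hg, h]
    have hinj : Function.Injective g := by
      intro a b hab
      by_cases ha : Sum.inl a ∈ S <;> by_cases hb : Sum.inl b ∈ S <;>
        simp [hg, ha, hb] at hab <;> first | exact hab | exact hab.1
    calc Fintype.card V = (Finset.univ.image g).card := by
          rw [Finset.card_image_of_injective _ hinj, Finset.card_univ]
      _ ≤ S.card := Finset.card_le_card (by
          intro x hx
          simp only [Finset.mem_image] at hx
          obtain ⟨v, -, rfl⟩ := hx
          exact hmaps v)

end Aux

theorem stmt16 {V : Type*} [Fintype V] [Nonempty V] (G : SimpleGraph V)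
    (r : ℕ) (hr : 2 ≤ r) :
    oidRNum (corona G (⊥ : SimpleGraph (Fin r))) = 3 * Fintype.card V ∧
    oidRNum (corona G (⊥ : SimpleGraph (Fin r))) =
      3 * coverNum (corona G (⊥ : SimpleGraph (Fin r))) := by
  have hr2 := hr
  set H : SimpleGraph (Fin r) := (⊥ : SimpleGraph (Fin r)) with hH
  have hmem : 3 * Fintype.card V ∈
      {w | ∃ f : (V ⊕ V × Fin r) → ℕ, IsOIDRDF (corona G H) f ∧ w = ∑ v, f v} := by
    refine ⟨fun x => match x with | Sum.inl _ => 3 | Sum.inr _ => 0, ?_, ?_⟩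
    · refine ⟨?_, ?_, ?_, ?_⟩
      · rintro (v | p) <;> simp
      · rintro (v | p) h
        · simp at h
        · left
          exact ⟨Sum.inl p.1, (corona G H).adj_symm ((corona_adj_inl_inr G r p.1 p).mpr rfl), rfl⟩
      · rintro (v | p) h <;> simp at h
      · rintro (u | p) (w | q) hadj h
        · simp at h
        · simp at h
        · simp
        · exfalso
          have := corona_nbr_of_inr G r p.1 p.2 (Sum.inr q) (by simpa using hadj)
          simp at this
    · rw [Fintype.sum_sum_type]
      simp [Finset.card_univ, mul_comm]
  have hlow : ∀ w ∈ {w | ∃ f : (V ⊕ V × Fin r) → ℕ,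
      IsOIDRDF (corona G H) f ∧ w = ∑ v, f v}, 3 * Fintype.card V ≤ w := by
    rintro w ⟨f, hf, rfl⟩
    rw [Fintype.sum_sum_type, Fintype.sum_prod_type, ← Finset.sum_add_distrib]
    calc 3 * Fintype.card V = ∑ _v : V, 3 := by simp [mul_comm]
      _ ≤ _ := Finset.sum_le_sum fun v _ => corona_block_sum G r hr2 f hf v
  have h1 : oidRNum (corona G H) = 3 * Fintype.card V :=
    le_antisymm (Nat.sInf_le hmem) (le_csInf ⟨_, hmem⟩ hlow)
  refine ⟨h1, ?_⟩
  rw [h1, corona_cover_num G r hr2]
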